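/- arXiv:1709.06487 — 8 statements merged into one kernel-verified Lean document; each statement's English description precedes it below -/
import Mathlib

section
/- For every γ > 0, every u ∈ E, and every ū ∈ T_γ(u), one has φ(ū) ≤ φ_γ(u) − ((1 − γL)/(2γ))‖u − ū‖² (Proposition 1(ii)). -/
open scoped RealInnerProductSpace
open Filter Topology Asymptotics

/-- Moreau envelope `g^γ(v) = inf_w { g(w) + (1/(2γ))‖w − v‖² }` of an
extended-real-valued function `g`. -/
noncomputable def moreauEnv {E : Type*} [NormedAddCommGroup E] [InnerProductSpace ℝ E]
    (g : E → EReal) (γ : ℝ) (v : E) : EReal :=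
  ⨅ w : E, g w + (((1 / (2 * γ)) * ‖w - v‖ ^ 2 : ℝ) : EReal)

/-- The (set-valued) proximal mapping
`prox_{γg}(v) = argmin_w { g(w) + (1/(2γ))‖w − v‖² }`. -/
def proxSet {E : Type*} [NormedAddCommGroup E] [InnerProductSpace ℝ E]
    (g : E → EReal) (γ : ℝ) (v : E) : Set E :=
  {w | ∀ w' : E, g w + (((1 / (2 * γ)) * ‖w - v‖ ^ 2 : ℝ) : EReal)
      ≤ g w' + (((1 / (2 * γ)) * ‖w' - v‖ ^ 2 : ℝ) : EReal)}

/-- The forward–backward envelope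
`φ_γ(u) = ℓ(u) − (γ/2)‖∇ℓ(u)‖² + g^γ(u − γ∇ℓ(u))`, where `l'` plays the role
of the gradient `∇ℓ`. -/
noncomputable def fbe {E : Type*} [NormedAddCommGroup E] [InnerProductSpace ℝ E]
    (l : E → ℝ) (l' : E → E) (g : E → EReal) (γ : ℝ) (u : E) : EReal :=
  ((l u - (γ / 2) * ‖l' u‖ ^ 2 : ℝ) : EReal) + moreauEnv g γ (u - γ • l' u)

theorem descent_lemma
    {E : Type*} [NormedAddCommGroup E] [InnerProductSpace ℝ E] [FiniteDimensional ℝ E]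
    (l : E → ℝ) (l' : E → E) (L : ℝ) (hL : 0 < L)
    (hgrad : ∀ x : E, HasGradientAt l (l' x) x)
    (hlip : ∀ x y : E, ‖l' x - l' y‖ ≤ L * ‖x - y‖)
    (x y : E) :
    l y ≤ l x + ⟪l' x, y - x⟫ + L / 2 * ‖y - x‖ ^ 2 := by
  set d := y - x with hd
  have hcont : Continuous l' := by
    have : LipschitzWith (Real.toNNReal L) l' := by
      apply LipschitzWith.of_dist_le_mul
      intro a b
      simpa [dist_eq_norm, Real.coe_toNNReal _ hL.le] using hlip a b
    exact this.continuous
  have hderiv : ∀ t : ℝ, HasDerivAt (fun t : ℝ => l (x + t • d))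
      ⟪l' (x + t • d), d⟫ t := by
    intro t
    have hc : HasDerivAt (fun t : ℝ => x + t • d) d t := by
      simpa using ((hasDerivAt_id t).smul_const d).const_add x
    have hf : HasFDerivAt l ((InnerProductSpace.toDual ℝ E) (l' (x + t • d)))
        (x + t • d) := (hasGradientAt_iff_hasFDerivAt.mp (hgrad _))
    have := hf.comp_hasDerivAt t hc
    simp at this
    exact this
  have hcont2 : Continuous fun t : ℝ => ⟪l' (x + t • d), d⟫ := by
    exact (hcont.comp (by fun_prop)).inner continuous_const
  have hint : ∫ t in (0:ℝ)..1, ⟪l' (x + t • d), d⟫ = l (x + (1:ℝ) • d) - l (x + (0:ℝ) • d) := by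
    exact intervalIntegral.integral_eq_sub_of_hasDerivAt (fun t _ => hderiv t)
      (hcont2.intervalIntegrable 0 1)
  have heq : l y - l x = ∫ t in (0:ℝ)..1, ⟪l' (x + t • d), d⟫ := by
    rw [hint]; simp [hd]
  have hbound : ∫ t in (0:ℝ)..1, ⟪l' (x + t • d), d⟫ ≤
      ∫ t in (0:ℝ)..1, (⟪l' x, d⟫ + L * t * ‖d‖ ^ 2) := by
    apply intervalIntegral.integral_mono_on (by norm_num)
      (hcont2.intervalIntegrable 0 1)
      ((by fun_prop : Continuous fun t : ℝ => ⟪l' x, d⟫ + L * t * ‖d‖ ^ 2).intervalIntegrable 0 1)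
    intro t ht
    rw [Set.mem_Icc] at ht
    have h1 : ⟪l' (x + t • d), d⟫ - ⟪l' x, d⟫ = ⟪l' (x + t • d) - l' x, d⟫ := by
      rw [inner_sub_left]
    have h2 : ⟪l' (x + t • d) - l' x, d⟫ ≤ ‖l' (x + t • d) - l' x‖ * ‖d‖ :=
      real_inner_le_norm _ _
    have h3 : ‖l' (x + t • d) - l' x‖ ≤ L * (t * ‖d‖) := by
      have := hlip (x + t • d) x
      simpa [norm_smul, abs_of_nonneg ht.1, mul_assoc] using this
    have h4 : ‖l' (x + t • d) - l' x‖ * ‖d‖ ≤ L * t * ‖d‖ ^ 2 := by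
      have := mul_le_mul_of_nonneg_right h3 (norm_nonneg d)
      nlinarith [norm_nonneg d]
    nlinarith
  have hval : ∫ t in (0:ℝ)..1, (⟪l' x, d⟫ + L * t * ‖d‖ ^ 2) =
      ⟪l' x, d⟫ + L / 2 * ‖d‖ ^ 2 := by
    have e : ∀ t : ℝ, ⟪l' x, d⟫ + L * t * ‖d‖ ^ 2 = ⟪l' x, d⟫ + (L * ‖d‖ ^ 2) * t := by
      intro t; ring
    simp_rw [e]
    rw [intervalIntegral.integral_add intervalIntegrable_const
      ((by fun_prop : Continuous fun t : ℝ => (L * ‖d‖ ^ 2) * t).intervalIntegrable 0 1),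
      intervalIntegral.integral_const_mul]
    simp [integral_id]
    ring
  have := heq ▸ hbound
  rw [hval] at this
  nlinarith [this]

/-- `φ(ū) ≤ φ_γ(u) − ((1 − γL)/(2γ))‖u − ū‖²` for every
`ū ∈ T_γ(u)`. -/
theorem cost_of_fb_step_le_fbe
    {E : Type*} [NormedAddCommGroup E] [InnerProductSpace ℝ E] [FiniteDimensional ℝ E]
    (l : E → ℝ) (l' : E → E) (g : E → EReal) (L γ : ℝ)
    (hL : 0 < L) (hγ : 0 < γ)
    (hgrad : ∀ x : E, HasGradientAt l (l' x) x)
    (hlip : ∀ x y : E, ‖l' x - l' y‖ ≤ L * ‖x - y‖)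
    (hproper : ∃ x : E, g x ≠ ⊤) (hbot : ∀ x : E, g x ≠ ⊥)
    (hlsc : LowerSemicontinuous g)
    (hbdd : ∃ m : ℝ, ∀ x : E, (m : EReal) ≤ g x)
    (u ub : E) (hub : ub ∈ proxSet g γ (u - γ • l' u)) :
    (l ub : EReal) + g ub ≤
      fbe l l' g γ u - ((((1 - γ * L) / (2 * γ)) * ‖u - ub‖ ^ 2 : ℝ) : EReal) := by
  set v := u - γ • l' u with hv
  -- g ub is finite
  obtain ⟨x₀, hx₀⟩ := hproper
  have hub' := hub x₀
  have hubtop : g ub ≠ ⊤ := by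
    intro h
    rw [h, EReal.top_add_of_ne_bot (EReal.coe_ne_bot _)] at hub'
    have hlt : g x₀ + (((1 / (2 * γ)) * ‖x₀ - v‖ ^ 2 : ℝ) : EReal) < ⊤ :=
      EReal.add_lt_top hx₀ (EReal.coe_ne_top _)
    exact absurd (top_le_iff.mp hub') (ne_of_lt hlt)
  obtain ⟨r, hr⟩ : ∃ r : ℝ, g ub = (r : EReal) := by
    lift g ub to ℝ using ⟨hubtop, hbot ub⟩ with r
    exact ⟨r, rfl⟩
  have hme : moreauEnv g γ v = g ub + (((1 / (2 * γ)) * ‖ub - v‖ ^ 2 : ℝ) : EReal) :=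
    le_antisymm (iInf_le _ ub) (le_iInf hub)
  rw [fbe, ← hv, hme, hr]
  have key := descent_lemma l l' L hL hgrad hlip u ub
  norm_cast
  have hexp : ‖ub - v‖ ^ 2 = ‖ub - u‖ ^ 2 + 2 * γ * ⟪ub - u, l' u⟫ + γ ^ 2 * ‖l' u‖ ^ 2 := by
    have h5 : ub - v = (ub - u) + γ • l' u := by rw [hv]; abel
    rw [h5, norm_add_sq_real, real_inner_smul_right, norm_smul]
    simp [abs_of_pos hγ]
    ring
  have hns : ‖u - ub‖ = ‖ub - u‖ := norm_sub_rev u ub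
  have hip : ⟪l' u, ub - u⟫ = ⟪ub - u, l' u⟫ := real_inner_comm _ _
  rw [hip] at key
  rw [hexp, hns]
  have h2γ : (2 * γ) ≠ 0 := by positivity
  have expand : (l u - γ / 2 * ‖l' u‖ ^ 2) + (r + 1 / (2 * γ) * (‖ub - u‖ ^ 2 + 2 * γ * ⟪ub - u, l' u⟫ + γ ^ 2 * ‖l' u‖ ^ 2)) - (1 - γ * L) / (2 * γ) * ‖ub - u‖ ^ 2 = l u + ⟪ub - u, l' u⟫ + L / 2 * ‖ub - u‖ ^ 2 + r := by
    field_simp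
    ring
  rw [expand]
  linarith [key]
end

section
/- For every γ > 0, the forward–backward envelope φ_γ : E → ℝ is real-valued and locally Lipschitz continuous (strictly continuous) on all of E. -/
open scoped RealInnerProductSpace
open Filter Topology Asymptotics

section Aux

variable {E : Type*} [NormedAddCommGroup E] [InnerProductSpace ℝ E]
variable (g : E → EReal) (γ : ℝ) (m : ℝ) (x0 : E)

lemma le_moreau (hγ : 0 < γ) (hm : ∀ x : E, (m : EReal) ≤ g x) (v : E) :
    (m : EReal) ≤ moreauEnv g γ v := by
  refine le_iInf fun w => ?_
  calc (m : EReal) = (m : EReal) + ((0 : ℝ) : EReal) := by norm_num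
    _ ≤ g w + (((1 / (2 * γ)) * ‖w - v‖ ^ 2 : ℝ) : EReal) := by
        refine add_le_add (hm w) ?_
        exact_mod_cast mul_nonneg (by positivity) (by positivity)

lemma moreau_le (v : E) :
    moreauEnv g γ v ≤ g x0 + (((1 / (2 * γ)) * ‖x0 - v‖ ^ 2 : ℝ) : EReal) :=
  iInf_le _ x0

lemma moreau_ne_top (hx0 : g x0 ≠ ⊤) (v : E) : moreauEnv g γ v ≠ ⊤ := by
  refine ne_top_of_le_ne_top ?_ (moreau_le g γ x0 v)
  exact (EReal.add_lt_top hx0 (EReal.coe_ne_top _)).ne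

lemma moreau_ne_bot (hγ : 0 < γ) (hm : ∀ x : E, (m : EReal) ≤ g x) (v : E) :
    moreauEnv g γ v ≠ ⊥ :=
  fun h => by simpa [h] using le_moreau g γ m hγ hm v

end Aux

/-- the FBE is real-valued and locally Lipschitz (strictly
continuous) on all of `E`. -/
theorem fbe_realValued_locallyLipschitz
    {E : Type*} [NormedAddCommGroup E] [InnerProductSpace ℝ E] [FiniteDimensional ℝ E]
    (l : E → ℝ) (l' : E → E) (g : E → EReal) (L γ : ℝ)
    (hL : 0 < L) (hγ : 0 < γ)
    (hgrad : ∀ x : E, HasGradientAt l (l' x) x)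
    (hlip : ∀ x y : E, ‖l' x - l' y‖ ≤ L * ‖x - y‖)
    (hproper : ∃ x : E, g x ≠ ⊤) (hbot : ∀ x : E, g x ≠ ⊥)
    (hlsc : LowerSemicontinuous g)
    (hbdd : ∃ m : ℝ, ∀ x : E, (m : EReal) ≤ g x) :
    ∃ f : E → ℝ, (∀ u : E, fbe l l' g γ u = (f u : EReal)) ∧ LocallyLipschitz f := by
  obtain ⟨x0, hx0⟩ := hproper
  obtain ⟨m, hm⟩ := hbdd
  set c : ℝ := 1 / (2 * γ) with hc_def
  have hc : 0 < c := by positivity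
  -- the real-valued Moreau envelope
  set fM : E → ℝ := fun v => (moreauEnv g γ v).toReal with hfM_def
  have hMne_top : ∀ v, moreauEnv g γ v ≠ ⊤ := moreau_ne_top g γ x0 hx0
  have hMne_bot : ∀ v, moreauEnv g γ v ≠ ⊥ := moreau_ne_bot g γ m hγ hm
  have hMeq : ∀ v, moreauEnv g γ v = ((fM v : ℝ) : EReal) := fun v =>
    (EReal.coe_toReal (hMne_top v) (hMne_bot v)).symm
  -- upper bound for fM
  set gx0 : ℝ := (g x0).toReal with hgx0_def
  have hgx0 : g x0 = ((gx0 : ℝ) : EReal) := (EReal.coe_toReal hx0 (hbot x0)).symm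
  have hub : ∀ v : E, fM v ≤ gx0 + c * ‖x0 - v‖ ^ 2 := by
    intro v
    have h := moreau_le g γ x0 v
    rw [hMeq v, hgx0, ← EReal.coe_add] at h
    exact_mod_cast h
  -- key one-sided Lipschitz estimate
  have key : ∀ (v v' : E) (B : ℝ), fM v ≤ B →
      fM v' ≤ fM v + c * (2 * Real.sqrt ((B + 1 - m) / c) + ‖v - v'‖) * ‖v - v'‖ := by
    intro v v' B hB
    set ρ : ℝ := Real.sqrt ((B + 1 - m) / c) with hρ_def
    refine le_of_forall_pos_le_add fun ε hε => ?_
    set ε' : ℝ := min ε 1 with hε'_def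
    have hε' : 0 < ε' := lt_min hε one_pos
    have hε'1 : ε' ≤ 1 := min_le_right _ _
    -- get a near-minimizer
    have hlt : moreauEnv g γ v < ((fM v + ε' : ℝ) : EReal) := by
      rw [hMeq v]
      exact_mod_cast lt_add_of_pos_right _ hε'
    rw [moreauEnv, iInf_lt_iff] at hlt
    obtain ⟨w, hw⟩ := hlt
    have hgw_ne_top : g w ≠ ⊤ := by
      intro h
      rw [h, EReal.top_add_of_ne_bot (EReal.coe_ne_bot _)] at hw
      exact (not_top_lt hw)
    set gw : ℝ := (g w).toReal with hgw_def
    have hgw : g w = ((gw : ℝ) : EReal) := (EReal.coe_toReal hgw_ne_top (hbot w)).symm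
    rw [hgw, ← EReal.coe_add] at hw
    have hw' : gw + c * ‖w - v‖ ^ 2 < fM v + ε' := by exact_mod_cast hw
    have hmgw : m ≤ gw := by
      have := hm w; rw [hgw] at this; exact_mod_cast this
    -- bound on ‖w - v‖
    have hq : c * ‖w - v‖ ^ 2 ≤ B + 1 - m := by nlinarith
    have hwvρ : ‖w - v‖ ≤ ρ := by
      have h1 : ‖w - v‖ ^ 2 ≤ (B + 1 - m) / c := by
        rw [le_div_iff₀ hc]; nlinarith
      have h2 : ρ ^ 2 = (B + 1 - m) / c :=
        Real.sq_sqrt (le_trans (by positivity) h1)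
      nlinarith [Real.sqrt_nonneg ((B + 1 - m) / c), norm_nonneg (w - v)]
    -- estimate fM v'
    have hub' : fM v' ≤ gw + c * ‖w - v'‖ ^ 2 := by
      have h := moreau_le g γ w v'
      rw [hMeq v', hgw, ← EReal.coe_add] at h
      exact_mod_cast h
    have htri : ‖w - v'‖ ≤ ‖w - v‖ + ‖v - v'‖ := by
      have := norm_sub_le_norm_sub_add_norm_sub w v v'
      linarith [norm_sub_le (w - v) (v - v')]
    have hsq : ‖w - v'‖ ^ 2 ≤ ‖w - v‖ ^ 2 + (2 * ρ + ‖v - v'‖) * ‖v - v'‖ := by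
      nlinarith [norm_nonneg (w - v'), norm_nonneg (w - v), norm_nonneg (v - v'),
        Real.sqrt_nonneg ((B + 1 - m) / c)]
    have : fM v' ≤ fM v + ε' + c * (2 * ρ + ‖v - v'‖) * ‖v - v'‖ := by nlinarith
    have hεle : ε' ≤ ε := min_le_left _ _
    linarith
  -- fM is locally Lipschitz
  have hfM_lip : LocallyLipschitz fM := by
    intro v0
    set B : ℝ := gx0 + c * (‖x0 - v0‖ + 1) ^ 2 with hB_def
    have hBv : ∀ v ∈ Metric.ball v0 1, fM v ≤ B := by
      intro v hv
      refine le_trans (hub v) ?_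
      have h1 : ‖x0 - v‖ ≤ ‖x0 - v0‖ + 1 := by
        have := norm_sub_le_norm_sub_add_norm_sub x0 v0 v
        have hd : ‖v0 - v‖ ≤ 1 := by
          rw [← dist_eq_norm]; rw [Metric.mem_ball, dist_comm] at hv; linarith
        linarith
      have : ‖x0 - v‖ ^ 2 ≤ (‖x0 - v0‖ + 1) ^ 2 := by
        nlinarith [norm_nonneg (x0 - v), norm_nonneg (x0 - v0)]
      nlinarith
    set ρ : ℝ := Real.sqrt ((B + 1 - m) / c) with hρ_def
    have hρ0 : 0 ≤ ρ := Real.sqrt_nonneg _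
    set K : ℝ := c * (2 * ρ + 2) with hK_def
    have hK0 : 0 ≤ K := by positivity
    refine ⟨K.toNNReal, Metric.ball v0 1, Metric.ball_mem_nhds _ one_pos, ?_⟩
    refine LipschitzOnWith.of_dist_le_mul fun v hv v' hv' => ?_
    have hd2 : dist v v' ≤ 2 := by
      have := Metric.mem_ball.1 hv
      have := Metric.mem_ball.1 hv'
      calc dist v v' ≤ dist v v0 + dist v0 v' := dist_triangle _ _ _
        _ ≤ 2 := by rw [dist_comm v0 v']; linarith
    have hone : ∀ a b : E, a ∈ Metric.ball v0 1 → b ∈ Metric.ball v0 1 →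
        fM a - fM b ≤ K * dist a b := by
      intro a b ha hb
      have h := key b a B (hBv b hb)
      have hnv : ‖b - a‖ = dist a b := by rw [dist_comm, dist_eq_norm]
      rw [hnv] at h
      have hdab : dist a b ≤ 2 := by
        calc dist a b ≤ dist a v0 + dist v0 b := dist_triangle _ _ _
          _ ≤ 2 := by
            rw [dist_comm v0 b]
            linarith [Metric.mem_ball.1 ha, Metric.mem_ball.1 hb]
      have : c * (2 * ρ + dist a b) * dist a b ≤ K * dist a b := by
        have hd0 := dist_nonneg (x := a) (y := b)
        have h0 : 0 ≤ c * dist a b * (2 - dist a b) :=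
          mul_nonneg (mul_nonneg hc.le hd0) (by linarith)
        nlinarith [h0]
      linarith
    rw [Real.coe_toNNReal K hK0, Real.dist_eq]
    rcases abs_cases (fM v - fM v') with ⟨h, _⟩ | ⟨h, _⟩ <;> rw [h]
    · exact hone v v' hv hv'
    · have := hone v' v hv' hv
      rw [dist_comm] at this
      linarith
  -- l' is Lipschitz
  have hl'lip : LipschitzWith L.toNNReal l' := by
    refine LipschitzWith.of_dist_le_mul fun x y => ?_
    rw [dist_eq_norm, dist_eq_norm, Real.coe_toNNReal L hL.le]
    exact hlip x y
  -- l is locally Lipschitz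
  have hl_cd : ContDiff ℝ 1 l := by
    rw [contDiff_one_iff_fderiv]
    have hfd : ∀ x : E, fderiv ℝ l x = InnerProductSpace.toDual ℝ E (l' x) := fun x =>
      ((hgrad x).hasFDerivAt).fderiv
    refine ⟨fun x => ((hgrad x).hasFDerivAt).differentiableAt, ?_⟩
    have : Continuous fun x => (InnerProductSpace.toDual ℝ E) (l' x) :=
      (InnerProductSpace.toDual ℝ E).continuous.comp hl'lip.continuous
    exact continuous_congr (fun x => (hfd x).symm) |>.1 this
  have hl_lip : LocallyLipschitz l := hl_cd.locallyLipschitz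
  -- u ↦ (γ/2) * ‖l' u‖ ^ 2 is locally Lipschitz
  have hsq_lip : LocallyLipschitz fun u : E => (γ / 2) * ‖l' u‖ ^ 2 := by
    have h1 : ContDiff ℝ 1 fun t : ℝ => (γ / 2) * t := contDiff_const.mul contDiff_id
    have h2 : ContDiff ℝ 1 fun x : E => ‖x‖ ^ 2 := contDiff_norm_sq ℝ
    exact (h1.locallyLipschitz.comp h2.locallyLipschitz).comp hl'lip.locallyLipschitz
  -- u ↦ u - γ • l' u is Lipschitz
  have hT_lip : LipschitzWith (1 + γ * L).toNNReal fun u : E => u - γ • l' u := by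
    refine LipschitzWith.of_dist_le_mul fun x y => ?_
    rw [dist_eq_norm, dist_eq_norm, Real.coe_toNNReal _ (by positivity)]
    have heq : (x - γ • l' x) - (y - γ • l' y) = (x - y) - γ • (l' x - l' y) := by
      rw [smul_sub]; abel
    rw [heq]
    calc ‖(x - y) - γ • (l' x - l' y)‖ ≤ ‖x - y‖ + ‖γ • (l' x - l' y)‖ := norm_sub_le _ _
      _ ≤ ‖x - y‖ + γ * (L * ‖x - y‖) := by
          rw [norm_smul, Real.norm_eq_abs, abs_of_pos hγ]
          exact add_le_add_right (mul_le_mul_of_nonneg_left (hlip x y) hγ.le) _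
      _ = (1 + γ * L) * ‖x - y‖ := by ring
  have hcomp : LocallyLipschitz fun u : E => fM (u - γ • l' u) :=
    hfM_lip.comp hT_lip.locallyLipschitz
  -- assemble
  refine ⟨fun u => (l u - (γ / 2) * ‖l' u‖ ^ 2) + fM (u - γ • l' u), fun u => ?_, ?_⟩
  · rw [fbe, hMeq (u - γ • l' u), ← EReal.coe_add]
  · exact (hl_lip.sub hsq_lip).add hcomp
end

section
/- Well-definedness of the linesearch in algorithm PANOC: let 0 < γ < 1/L and 0 < σ < γ(1 − γL)/2. For every u ∈ E, every ū ∈ T_γ(u) with r := (u − ū)/γ ≠ 0, and every direction d ∈ E, there exists i ∈ ℕ such that τ = (1/2)^i satisfies φ_γ(u − (1 − τ)γ r + τ d) ≤ φ_γ(u) − σ‖r‖²; i.e., the backtracking linesearch terminates after finitely many halvings. -/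
open scoped RealInnerProductSpace
open Filter Topology Asymptotics

/-- Descent lemma: a function with `L`-Lipschitz gradient admits a quadratic
upper bound. -/
lemma descent_lemma_aux {E : Type*} [NormedAddCommGroup E] [InnerProductSpace ℝ E]
    [CompleteSpace E]
    (l : E → ℝ) (l' : E → E) (L : ℝ)
    (hgrad : ∀ x : E, HasGradientAt l (l' x) x)
    (hlip : ∀ x y : E, ‖l' x - l' y‖ ≤ L * ‖x - y‖) (x y : E) :
    l y ≤ l x + ⟪l' x, y - x⟫ + L / 2 * ‖y - x‖ ^ 2 := by
  set v := y - x with hv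
  have hc : ∀ t : ℝ, HasDerivAt (fun t : ℝ => x + t • v) v t := fun t => by
    simpa using ((hasDerivAt_id t).smul_const v).const_add x
  set h : ℝ → ℝ := fun t => l (x + t • v) - t * ⟪l' x, v⟫ - L / 2 * t ^ 2 * ‖v‖ ^ 2 with hh
  have hd : ∀ t : ℝ,
      HasDerivAt h (⟪l' (x + t • v), v⟫ - ⟪l' x, v⟫ - L * t * ‖v‖ ^ 2) t := by
    intro t
    have h1 : HasDerivAt (fun t : ℝ => l (x + t • v)) (⟪l' (x + t • v), v⟫) t := by
      have := (hgrad (x + t • v)).hasFDerivAt.comp_hasDerivAt t (hc t)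
      simpa [Function.comp_def] using this
    have h2 : HasDerivAt (fun t : ℝ => t * ⟪l' x, v⟫) (⟪l' x, v⟫) t := by
      simpa using (hasDerivAt_id t).mul_const (⟪l' x, v⟫)
    have h3 : HasDerivAt (fun t : ℝ => L / 2 * t ^ 2 * ‖v‖ ^ 2) (L * t * ‖v‖ ^ 2) t := by
      have := ((hasDerivAt_pow 2 t).const_mul (L / 2)).mul_const (‖v‖ ^ 2)
      exact this.congr_deriv (by rw [show (2:ℕ) - 1 = 1 from rfl]; ring)
    exact (h1.sub h2).sub h3
  have hanti : AntitoneOn h (Set.Icc (0 : ℝ) 1) := by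
    apply antitoneOn_of_deriv_nonpos (convex_Icc 0 1)
    · exact fun t _ => (hd t).continuousAt.continuousWithinAt
    · exact fun t _ => (hd t).differentiableAt.differentiableWithinAt
    · intro t ht
      rw [interior_Icc] at ht
      rw [(hd t).deriv]
      have hinner : ⟪l' (x + t • v), v⟫ - ⟪l' x, v⟫ ≤ L * t * ‖v‖ ^ 2 := by
        have h4 : ⟪l' (x + t • v) - l' x, v⟫ ≤ ‖l' (x + t • v) - l' x‖ * ‖v‖ :=
          real_inner_le_norm _ _
        have h5 : ‖l' (x + t • v) - l' x‖ ≤ L * ‖t • v‖ := by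
          simpa using hlip (x + t • v) x
        have h6 : ‖t • v‖ = t * ‖v‖ := by
          rw [norm_smul, Real.norm_eq_abs, abs_of_pos ht.1]
        have h7 : (0:ℝ) ≤ ‖v‖ := norm_nonneg v
        rw [inner_sub_left] at h4
        have h8 : ‖l' (x + t • v) - l' x‖ * ‖v‖ ≤ L * (t * ‖v‖) * ‖v‖ := by
          rw [← h6]; exact mul_le_mul_of_nonneg_right h5 h7
        nlinarith [h4, h8]
      linarith
  have key : h 1 ≤ h 0 := hanti (by norm_num) (by norm_num) (by norm_num)
  have h0 : h 0 = l x := by simp [hh]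
  have h1 : h 1 = l y - ⟪l' x, v⟫ - L / 2 * ‖v‖ ^ 2 := by
    have hxy : x + v = y := by rw [hv]; abel
    simp [hh, hxy]
  rw [h0, h1] at key
  linarith

/-- well-definedness of the PANOC linesearch: the backtracking
terminates after finitely many halvings. -/
theorem panoc_linesearch_terminates
    {E : Type*} [NormedAddCommGroup E] [InnerProductSpace ℝ E] [FiniteDimensional ℝ E]
    (l : E → ℝ) (l' : E → E) (g : E → EReal) (L γ : ℝ)
    (hL : 0 < L) (hγ : 0 < γ)
    (hgrad : ∀ x : E, HasGradientAt l (l' x) x)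
    (hlip : ∀ x y : E, ‖l' x - l' y‖ ≤ L * ‖x - y‖)
    (hproper : ∃ x : E, g x ≠ ⊤) (hbot : ∀ x : E, g x ≠ ⊥)
    (hlsc : LowerSemicontinuous g)
    (hbdd : ∃ m : ℝ, ∀ x : E, (m : EReal) ≤ g x)
    (hγL : γ < 1 / L) (σ : ℝ) (hσ : 0 < σ) (hσ' : σ < γ * (1 - γ * L) / 2)
    (u ub d : E) (hub : ub ∈ proxSet g γ (u - γ • l' u))
    (r : E) (hr : r = (1 / γ) • (u - ub)) (hr0 : r ≠ 0) :
    ∃ i : ℕ,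
      fbe l l' g γ (u - ((1 - (1 / 2 : ℝ) ^ i) * γ) • r + ((1 / 2 : ℝ) ^ i) • d) ≤
        fbe l l' g γ u - ((σ * ‖r‖ ^ 2 : ℝ) : EReal) := by
  classical
  have hγ0 : γ ≠ 0 := ne_of_gt hγ
  set c : ℝ := 1 / (2 * γ) with hc
  set x : E := u - γ • l' u with hx
  -- g ub is a real number
  obtain ⟨x0, hx0⟩ := hproper
  have hgub_ne_top : g ub ≠ ⊤ := by
    intro htop
    have h1 := hub x0
    rw [htop, EReal.top_add_coe] at h1
    exact (EReal.add_lt_top hx0 (EReal.coe_ne_top _)).not_ge h1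
  obtain ⟨b, hb⟩ : ∃ b : ℝ, g ub = (b : EReal) :=
    ⟨(g ub).toReal, (EReal.coe_toReal hgub_ne_top (hbot ub)).symm⟩
  -- value of the Moreau envelope at x
  have hM : moreauEnv g γ x = ((b + c * ‖ub - x‖ ^ 2 : ℝ) : EReal) := by
    apply le_antisymm
    · rw [EReal.coe_add, ← hb]
      exact iInf_le _ ub
    · refine le_iInf fun w => ?_
      rw [EReal.coe_add, ← hb]
      exact hub w
  have hfbeu : fbe l l' g γ u
      = (((l u - γ / 2 * ‖l' u‖ ^ 2) + (b + c * ‖ub - x‖ ^ 2) : ℝ) : EReal) := by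
    rw [fbe, ← hx, hM]
    norm_cast
  -- basic relation: γ • r = u - ub
  have hgr : γ • r = u - ub := by
    rw [hr, smul_smul]
    field_simp
    rw [one_smul]
  have hnorm_ub : ‖ub - u‖ ^ 2 = γ ^ 2 * ‖r‖ ^ 2 := by
    have : ub - u = -(γ • r) := by rw [hgr]; abel
    rw [this, norm_neg, norm_smul, Real.norm_eq_abs, abs_of_pos hγ, mul_pow]
  -- expand ‖ub - x‖²
  have hexp : ‖ub - x‖ ^ 2
      = ‖ub - u‖ ^ 2 + 2 * (γ * ⟪ub - u, l' u⟫) + γ ^ 2 * ‖l' u‖ ^ 2 := by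
    have h1 : ub - x = (ub - u) + γ • l' u := by rw [hx]; abel
    rw [h1, @norm_add_sq_real, real_inner_smul_right]
    have h2 : ‖γ • l' u‖ ^ 2 = γ ^ 2 * ‖l' u‖ ^ 2 := by
      rw [norm_smul, Real.norm_eq_abs, abs_of_pos hγ]; ring
    rw [h2]
  -- descent lemma at ub
  have hdesc : l ub ≤ l u + ⟪l' u, ub - u⟫ + L / 2 * ‖ub - u‖ ^ 2 :=
    descent_lemma_aux l l' L hgrad hlip u ub
  set Φ : ℝ := (l u - γ / 2 * ‖l' u‖ ^ 2) + (b + c * ‖ub - x‖ ^ 2) with hΦ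
  have hinner_comm : ⟪ub - u, l' u⟫ = ⟪l' u, ub - u⟫ := real_inner_comm _ _
  have hkey : l ub + b ≤ Φ - γ * (1 - γ * L) / 2 * ‖r‖ ^ 2 := by
    have hΦ' : Φ = l u + b + ⟪l' u, ub - u⟫ + 1 / (2 * γ) * ‖ub - u‖ ^ 2 := by
      rw [hΦ, hexp, hc, hinner_comm]
      field_simp
      ring
    rw [hnorm_ub] at hdesc
    have e : 1 / (2 * γ) * ‖ub - u‖ ^ 2 = γ / 2 * ‖r‖ ^ 2 := by
      rw [hnorm_ub]; field_simp
    rw [hΦ', e]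
    nlinarith [hdesc]
  set K : ℝ := Φ - σ * ‖r‖ ^ 2 with hK
  have hr2 : (0:ℝ) < ‖r‖ ^ 2 := pow_pos (norm_pos_iff.mpr hr0) 2
  have hlt : l ub + b < K := by
    have : σ * ‖r‖ ^ 2 < γ * (1 - γ * L) / 2 * ‖r‖ ^ 2 :=
      (mul_lt_mul_of_pos_right hσ' hr2)
    rw [hK]
    clear_value x c Φ K
    linarith [hkey, this]
  -- continuity of the upper bound
  have hlcont : Continuous l := by
    rw [continuous_iff_continuousAt]
    exact fun v => (hgrad v).differentiableAt.continuousAt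
  have hl'cont : Continuous l' := by
    have : LipschitzWith (Real.toNNReal L) l' := by
      apply LipschitzWith.of_dist_le_mul
      intro a b'
      rw [dist_eq_norm, dist_eq_norm, Real.coe_toNNReal _ hL.le]
      exact hlip a b'
    exact this.continuous
  set F : E → ℝ := fun v =>
    (l v - γ / 2 * ‖l' v‖ ^ 2) + (b + c * ‖ub - (v - γ • l' v)‖ ^ 2) with hF
  have hFcont : Continuous F := by
    apply Continuous.add
    · exact hlcont.sub ((continuous_const.mul ((hl'cont.norm).pow 2)))
    · exact continuous_const.add (continuous_const.mul
        (((continuous_const.sub (continuous_id.sub (continuous_const.smul hl'cont))).norm).pow 2))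
  have hFub : F ub = l ub + b := by
    have h1 : ub - (ub - γ • l' ub) = γ • l' ub := by abel
    rw [hF]
    simp only
    rw [h1, norm_smul, Real.norm_eq_abs, abs_of_pos hγ, mul_pow, hc]
    field_simp
    ring
  -- the linesearch points converge to ub
  set w : E := γ • r + d with hw
  have hpt : ∀ τ : ℝ,
      u - ((1 - τ) * γ) • r + τ • d = ub + τ • w := by
    intro τ
    have hu : u = ub + γ • r := by rw [hgr]; abel
    rw [hu, hw]
    module
  have hτ : Tendsto (fun i : ℕ => ((1:ℝ)/2) ^ i) atTop (𝓝 0) := by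
    apply tendsto_pow_atTop_nhds_zero_of_lt_one <;> norm_num
  have hconv : Tendsto (fun i : ℕ => ub + ((1:ℝ)/2) ^ i • w) atTop (𝓝 ub) := by
    have := (hτ.smul_const w).const_add ub
    simpa using this
  have hFconv : Tendsto (fun i : ℕ => F (ub + ((1:ℝ)/2) ^ i • w)) atTop (𝓝 (F ub)) :=
    (hFcont.tendsto ub).comp hconv
  have hev : ∀ᶠ i : ℕ in atTop, F (ub + ((1:ℝ)/2) ^ i • w) < K := by
    apply hFconv.eventually_lt_const
    rw [hFub]; exact hlt
  obtain ⟨i, hi⟩ := hev.exists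
  refine ⟨i, ?_⟩
  set p : E := u - ((1 - (1 / 2 : ℝ) ^ i) * γ) • r + ((1 / 2 : ℝ) ^ i) • d with hp
  have hpeq : p = ub + ((1:ℝ)/2) ^ i • w := hpt _
  -- bound fbe at p by F p
  have hbound : fbe l l' g γ p ≤ ((F p : ℝ) : EReal) := by
    have h1 : ((F p : ℝ) : EReal) = ((l p - γ / 2 * ‖l' p‖ ^ 2 : ℝ) : EReal)
        + (((b + c * ‖ub - (p - γ • l' p)‖ ^ 2 : ℝ)) : EReal) := by
      rw [hF]; norm_cast
    rw [fbe, h1]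
    apply add_le_add_right
    have h2 : ((b + c * ‖ub - (p - γ • l' p)‖ ^ 2 : ℝ) : EReal)
        = g ub + ((c * ‖ub - (p - γ • l' p)‖ ^ 2 : ℝ) : EReal) := by
      rw [hb]; norm_cast
    rw [h2]
    exact iInf_le _ ub
  calc fbe l l' g γ p ≤ ((F p : ℝ) : EReal) := hbound
    _ ≤ ((K : ℝ) : EReal) := by
        rw [EReal.coe_le_coe_iff, hpeq]
        exact hi.le
    _ = fbe l l' g γ u - ((σ * ‖r‖ ^ 2 : ℝ) : EReal) := by
        rw [hfbeu, hK, EReal.coe_sub]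
end

section
/- Residual vanishing at Newton-type trial points: let R : E → E with R(u⋆) = 0, and suppose R is strictly differentiable at u⋆ with derivative J (HasStrictFDerivAt). Let (u^k) and (d^k) be sequences with u^k → u⋆, d^k → 0, d^k ≠ 0 for all k, and satisfying the Dennis–Moré condition ‖R(u^k) + J d^k‖ / ‖d^k‖ → 0. Then ‖R(u^k + d^k)‖ / ‖d^k‖ → 0. -/
open Filter Topology Asymptotics

/-- residual vanishing at Newton-type trial points under the
Dennis–Moré condition. -/
theorem residual_vanishing_dennis_more
    {E : Type*} [NormedAddCommGroup E] [InnerProductSpace ℝ E] [FiniteDimensional ℝ E]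
    (R : E → E) (ustar : E) (J : E →L[ℝ] E)
    (hzero : R ustar = 0) (hJ : HasStrictFDerivAt R J ustar)
    (u d : ℕ → E)
    (hu : Tendsto u atTop (𝓝 ustar)) (hd : Tendsto d atTop (𝓝 0))
    (hd0 : ∀ k, d k ≠ 0)
    (hdm : Tendsto (fun k => ‖R (u k) + J (d k)‖ / ‖d k‖) atTop (𝓝 0)) :
    Tendsto (fun k => ‖R (u k + d k)‖ / ‖d k‖) atTop (𝓝 0) := by
  have hpair : Tendsto (fun k => (u k + d k, u k)) atTop (𝓝 (ustar, ustar)) := by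
    have : Tendsto (fun k => u k + d k) atTop (𝓝 ustar) := by
      simpa using hu.add hd
    exact this.prodMk_nhds hu
  have ho : (fun k => R (u k + d k) - R (u k) - J (u k + d k - u k)) =o[atTop]
      (fun k => u k + d k - u k) := hJ.isLittleO.comp_tendsto hpair
  simp only [add_sub_cancel_left] at ho
  have h1 : Tendsto (fun k => ‖R (u k + d k) - R (u k) - J (d k)‖ / ‖d k‖) atTop (𝓝 0) := by
    have := ho.norm_norm
    exact this.tendsto_div_nhds_zero
  have hsum := h1.add hdm
  rw [add_zero] at hsum
  refine squeeze_zero (fun k => by positivity) (fun k => ?_) hsum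
  have hdk : (0:ℝ) < ‖d k‖ := norm_pos_iff.mpr (hd0 k)
  rw [← add_div, div_le_div_iff_of_pos_right hdk]
  calc ‖R (u k + d k)‖ = ‖(R (u k + d k) - R (u k) - J (d k)) + (R (u k) + J (d k))‖ := by
        congr 1; abel
    _ ≤ _ := norm_add_le _ _
end

section
/- Superlinear accuracy of Dennis–Moré steps: let R : E → E with R(u⋆) = 0, suppose R is strictly differentiable at u⋆ with derivative J (HasStrictFDerivAt), and suppose J is invertible. Let (u^k) and (d^k) be sequences with u^k → u⋆, u^k ≠ u⋆ for all k, d^k → 0, d^k ≠ 0 for all k, and satisfying the Dennis–Moré condition ‖R(u^k) + J d^k‖ / ‖d^k‖ → 0. Then ‖u^k + d^k − u⋆‖ / ‖u^k − u⋆‖ → 0. -/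
open Filter Topology Asymptotics

/-- superlinear accuracy of Dennis–Moré steps: the trial points
`u^k + d^k` approach `u⋆` superlinearly relative to `u^k`. -/
theorem dennis_more_superlinear_accuracy
    {E : Type*} [NormedAddCommGroup E] [InnerProductSpace ℝ E] [FiniteDimensional ℝ E]
    (R : E → E) (ustar : E) (J : E ≃L[ℝ] E)
    (hzero : R ustar = 0) (hJ : HasStrictFDerivAt R (J : E →L[ℝ] E) ustar)
    (u d : ℕ → E)
    (hu : Tendsto u atTop (𝓝 ustar)) (hu0 : ∀ k, u k ≠ ustar)
    (hd : Tendsto d atTop (𝓝 0)) (hd0 : ∀ k, d k ≠ 0)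
    (hdm : Tendsto (fun k => ‖R (u k) + (J : E →L[ℝ] E) (d k)‖ / ‖d k‖) atTop (𝓝 0)) :
    Tendsto (fun k => ‖u k + d k - ustar‖ / ‖u k - ustar‖) atTop (𝓝 0) := by
  set T := (J : E →L[ℝ] E) with hT
  have hdne : ∀ k, ‖d k‖ ≠ 0 := fun k => norm_ne_zero_iff.2 (hd0 k)
  have hene : ∀ k, ‖u k - ustar‖ ≠ 0 := fun k =>
    norm_ne_zero_iff.2 (sub_ne_zero.2 (hu0 k))
  -- Dennis–Moré condition as little-o
  have h1 : (fun k => R (u k) + T (d k)) =o[atTop] d := by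
    rw [← isLittleO_norm_norm]
    exact (isLittleO_iff_tendsto fun k h => absurd h (hdne k)).2 hdm
  -- strict differentiability as little-o along the sequence
  have h2 : (fun k => R (u k) - T (u k - ustar)) =o[atTop] (fun k => u k - ustar) := by
    have := hJ.hasFDerivAt.isLittleO.comp_tendsto hu
    simpa [hzero, Function.comp_def] using this
  -- combined little-o
  have hsum : ∀ k, (0:ℝ) ≤ ‖d k‖ + ‖u k - ustar‖ := fun k =>
    add_nonneg (norm_nonneg _) (norm_nonneg _)
  have hO1 : d =O[atTop] (fun k => ‖d k‖ + ‖u k - ustar‖) := by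
    refine IsBigO.of_bound 1 (Eventually.of_forall fun k => ?_)
    rw [one_mul, Real.norm_of_nonneg (hsum k)]
    exact le_add_of_nonneg_right (norm_nonneg _)
  have hO2 : (fun k => u k - ustar) =O[atTop] (fun k => ‖d k‖ + ‖u k - ustar‖) := by
    refine IsBigO.of_bound 1 (Eventually.of_forall fun k => ?_)
    rw [one_mul, Real.norm_of_nonneg (hsum k)]
    exact le_add_of_nonneg_left (norm_nonneg _)
  have h3 : (fun k => T (u k + d k - ustar)) =o[atTop]
      (fun k => ‖d k‖ + ‖u k - ustar‖) := by
    have heq : (fun k => T (u k + d k - ustar)) =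
        fun k => (R (u k) + T (d k)) - (R (u k) - T (u k - ustar)) := by
      funext k
      have : u k + d k - ustar = d k + (u k - ustar) := by abel
      rw [this, map_add]
      abel
    rw [heq]
    exact (h1.trans_isBigO hO1).sub (h2.trans_isBigO hO2)
  set C := ‖(J.symm : E →L[ℝ] E)‖ with hC
  have hCpos : (0:ℝ) < C + 1 := by positivity
  have hbound : ∀ k, ‖u k + d k - ustar‖ ≤ C * ‖T (u k + d k - ustar)‖ := by
    intro k
    have h := (J.symm : E →L[ℝ] E).le_opNorm (T (u k + d k - ustar))
    simpa [hT] using h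
  -- bootstrap: eventually ‖d k‖ ≤ 3 ‖u k - ustar‖
  have hev : ∀ᶠ k in atTop, ‖T (u k + d k - ustar)‖ ≤
      (1 / (2 * (C + 1))) * (‖d k‖ + ‖u k - ustar‖) := by
    have := h3.def (by positivity : (0:ℝ) < 1 / (2 * (C + 1)))
    filter_upwards [this] with k hk
    simpa [Real.norm_of_nonneg (hsum k)] using hk
  have hdle : ∀ᶠ k in atTop, ‖d k‖ ≤ 3 * ‖u k - ustar‖ := by
    filter_upwards [hev] with k hk
    have h4 : ‖d k‖ ≤ ‖u k + d k - ustar‖ + ‖u k - ustar‖ := by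
      have : d k = (u k + d k - ustar) - (u k - ustar) := by abel
      calc ‖d k‖ = ‖(u k + d k - ustar) - (u k - ustar)‖ := by rw [← this]
        _ ≤ _ := norm_sub_le _ _
    have h5 : ‖u k + d k - ustar‖ ≤ C * ((1 / (2 * (C + 1))) * (‖d k‖ + ‖u k - ustar‖)) :=
      (hbound k).trans (by
        have := mul_le_mul_of_nonneg_left hk (norm_nonneg (J.symm : E →L[ℝ] E))
        exact this)
    have hCle : C * (1 / (2 * (C + 1))) ≤ 1 / 2 := by
      rw [mul_one_div, div_le_div_iff₀ (by positivity) (by norm_num : (0:ℝ) < 2)]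
      nlinarith [norm_nonneg (J.symm : E →L[ℝ] E)]
    have h6 : ‖u k + d k - ustar‖ ≤ (1/2) * (‖d k‖ + ‖u k - ustar‖) := by
      calc ‖u k + d k - ustar‖ ≤ C * (1 / (2 * (C + 1))) * (‖d k‖ + ‖u k - ustar‖) := by
            rw [mul_assoc]; exact h5
        _ ≤ (1/2) * (‖d k‖ + ‖u k - ustar‖) :=
            mul_le_mul_of_nonneg_right hCle (hsum k)
    nlinarith [norm_nonneg (d k), norm_nonneg (u k - ustar)]
  have hO3 : (fun k => ‖d k‖ + ‖u k - ustar‖) =O[atTop] (fun k => u k - ustar) := by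
    refine IsBigO.of_bound 4 ?_
    filter_upwards [hdle] with k hk
    rw [Real.norm_of_nonneg (hsum k)]
    linarith [le_refl ‖u k - ustar‖]
  have h7 : (fun k => T (u k + d k - ustar)) =o[atTop] (fun k => u k - ustar) :=
    h3.trans_isBigO hO3
  have h8 : (fun k => u k + d k - ustar) =o[atTop] (fun k => u k - ustar) := by
    have heq : (fun k => u k + d k - ustar) =
        fun k => (J.symm : E →L[ℝ] E) (T (u k + d k - ustar)) := by
      funext k; simp [hT]
    rw [heq]
    exact ((J.symm : E →L[ℝ] E).isBigO_comp _ _).trans_isLittleO h7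
  have := isLittleO_norm_norm.2 h8
  exact (isLittleO_iff_tendsto fun k h => absurd h (hene k)).1 this
end

section
/- Eventual acceptance of unit stepsize: let 0 < γ < 1/L and 0 < σ < γ(1 − γL)/2. Let u⋆ ∈ E and let (u^k), (v^k) be sequences in E and (r^k) a sequence in E such that for all k: φ_γ(u^k) > φ_γ(u⋆) and φ_γ(u^k) − φ_γ(u⋆) ≥ (γ(1 − γL)/2)‖r^k‖², and suppose ε_k := (φ_γ(v^k) − φ_γ(u⋆)) / (φ_γ(u^k) − φ_γ(u⋆)) → 0. Then there exists K such that for all k ≥ K, φ_γ(v^k) ≤ φ_γ(u^k) − σ‖r^k‖², i.e., the PANOC linesearch condition is satisfied by the full Newton-type trial point v^k. -/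
open scoped RealInnerProductSpace
open Filter Topology Asymptotics

/-- eventual acceptance of the unit stepsize: the PANOC
linesearch condition is eventually satisfied by the full Newton-type trial
point. -/
theorem eventual_unit_stepsize
    {E : Type*} [NormedAddCommGroup E] [InnerProductSpace ℝ E] [FiniteDimensional ℝ E]
    (l : E → ℝ) (l' : E → E) (g : E → EReal) (L γ : ℝ)
    (hL : 0 < L) (hγ : 0 < γ)
    (hgrad : ∀ x : E, HasGradientAt l (l' x) x)
    (hlip : ∀ x y : E, ‖l' x - l' y‖ ≤ L * ‖x - y‖)
    (hproper : ∃ x : E, g x ≠ ⊤) (hbot : ∀ x : E, g x ≠ ⊥)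
    (hlsc : LowerSemicontinuous g)
    (hbdd : ∃ m : ℝ, ∀ x : E, (m : EReal) ≤ g x)
    (hγL : γ < 1 / L) (σ : ℝ) (hσ : 0 < σ) (hσ' : σ < γ * (1 - γ * L) / 2)
    (ustar : E) (u v : ℕ → E) (r : ℕ → E)
    (hgt : ∀ k, (fbe l l' g γ ustar).toReal < (fbe l l' g γ (u k)).toReal)
    (hge : ∀ k, γ * (1 - γ * L) / 2 * ‖r k‖ ^ 2 ≤
        (fbe l l' g γ (u k)).toReal - (fbe l l' g γ ustar).toReal)
    (heps : Tendsto
      (fun k => ((fbe l l' g γ (v k)).toReal - (fbe l l' g γ ustar).toReal) /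
        ((fbe l l' g γ (u k)).toReal - (fbe l l' g γ ustar).toReal))
      atTop (𝓝 0)) :
    ∃ K : ℕ, ∀ k ≥ K,
      (fbe l l' g γ (v k)).toReal ≤ (fbe l l' g γ (u k)).toReal - σ * ‖r k‖ ^ 2 := by
  set c := γ * (1 - γ * L) / 2 with hc
  have hγL' : γ * L < 1 := by
    rw [lt_div_iff₀ hL] at hγL; linarith
  have hcpos : 0 < c := by
    rw [hc]; have h1 : 0 < 1 - γ * L := by linarith
    positivity
  have hσc : σ / c < 1 := (div_lt_one hcpos).2 (by linarith)
  have hδ : 0 < 1 - σ / c := by linarith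
  have hev : ∀ᶠ k in atTop,
      ((fbe l l' g γ (v k)).toReal - (fbe l l' g γ ustar).toReal) /
        ((fbe l l' g γ (u k)).toReal - (fbe l l' g γ ustar).toReal) < 1 - σ / c := by
    have := heps.eventually (eventually_lt_nhds hδ)
    simpa using this
  obtain ⟨K, hK⟩ := hev.exists_forall_of_atTop
  refine ⟨K, fun k hk => ?_⟩
  have ha : 0 < (fbe l l' g γ (u k)).toReal - (fbe l l' g γ ustar).toReal := by
    have := hgt k; linarith
  have h1 := hK k hk
  rw [div_lt_iff₀ ha] at h1
  have h2 := hge k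
  have h3 : σ / c * c = σ := div_mul_cancel₀ σ hcpos.ne'
  nlinarith [mul_le_mul_of_nonneg_left h2 (div_nonneg hσ.le hcpos.le)]
end

section
/- Strong local minimality transfers from the FBE to the original cost: let γ > 0 and let u⋆ ∈ E be a fixed point of the forward–backward map, u⋆ ∈ T_γ(u⋆). If u⋆ is a strong local minimum of φ_γ, i.e., there exist c > 0 and ρ > 0 with φ_γ(u) ≥ φ_γ(u⋆) + c‖u − u⋆‖² for all u with ‖u − u⋆‖ < ρ, then φ(u) ≥ φ(u⋆) + c‖u − u⋆‖² for all u with ‖u − u⋆‖ < ρ; in particular u⋆ is a strong local minimum of φ. -/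
open scoped RealInnerProductSpace
open Filter Topology Asymptotics

/-- strong local minimality transfers from the FBE to the
original cost at fixed points of the forward–backward map. -/
theorem strong_local_min_fbe_to_cost
    {E : Type*} [NormedAddCommGroup E] [InnerProductSpace ℝ E] [FiniteDimensional ℝ E]
    (l : E → ℝ) (l' : E → E) (g : E → EReal) (L γ : ℝ)
    (hL : 0 < L) (hγ : 0 < γ)
    (hgrad : ∀ x : E, HasGradientAt l (l' x) x)
    (hlip : ∀ x y : E, ‖l' x - l' y‖ ≤ L * ‖x - y‖)
    (hproper : ∃ x : E, g x ≠ ⊤) (hbot : ∀ x : E, g x ≠ ⊥)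
    (hlsc : LowerSemicontinuous g)
    (hbdd : ∃ m : ℝ, ∀ x : E, (m : EReal) ≤ g x)
    (ustar : E) (hfix : ustar ∈ proxSet g γ (ustar - γ • l' ustar))
    (c ρ : ℝ) (hc : 0 < c) (hρ : 0 < ρ)
    (hmin : ∀ u : E, ‖u - ustar‖ < ρ →
      fbe l l' g γ ustar + ((c * ‖u - ustar‖ ^ 2 : ℝ) : EReal) ≤ fbe l l' g γ u) :
    ∀ u : E, ‖u - ustar‖ < ρ →
      ((l ustar : EReal) + g ustar) + ((c * ‖u - ustar‖ ^ 2 : ℝ) : EReal) ≤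
        (l u : EReal) + g u := by
  have key : ∀ v : E, (1 / (2 * γ)) * ‖v - (v - γ • l' v)‖ ^ 2 = (γ / 2) * ‖l' v‖ ^ 2 := by
    intro v
    rw [sub_sub_cancel, norm_smul, Real.norm_eq_abs, abs_of_pos hγ, mul_pow]
    field_simp
  have hfbe_le : ∀ u : E, fbe l l' g γ u ≤ (l u : EReal) + g u := by
    intro u
    have h1 : moreauEnv g γ (u - γ • l' u)
        ≤ g u + ((((γ / 2) * ‖l' u‖ ^ 2 : ℝ)) : EReal) := by
      have := iInf_le (fun w : E => g w + (((1 / (2 * γ)) * ‖w - (u - γ • l' u)‖ ^ 2 : ℝ) : EReal)) u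
      rwa [key u] at this
    calc fbe l l' g γ u
        ≤ ((l u - (γ / 2) * ‖l' u‖ ^ 2 : ℝ) : EReal) + (g u + (((γ / 2) * ‖l' u‖ ^ 2 : ℝ) : EReal)) :=
          add_le_add_right h1 _
      _ = (l u : EReal) + g u := by
          rw [add_comm (g u), ← add_assoc, ← EReal.coe_add]
          norm_num
  have hstar : (l ustar : EReal) + g ustar ≤ fbe l l' g γ ustar := by
    have henv : g ustar + ((((γ / 2) * ‖l' ustar‖ ^ 2 : ℝ)) : EReal)
        ≤ moreauEnv g γ (ustar - γ • l' ustar) := by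
      have := le_iInf hfix
      rwa [key ustar] at this
    calc (l ustar : EReal) + g ustar
        = ((l ustar - (γ / 2) * ‖l' ustar‖ ^ 2 : ℝ) : EReal)
            + (g ustar + (((γ / 2) * ‖l' ustar‖ ^ 2 : ℝ) : EReal)) := by
          rw [add_comm (g ustar), ← add_assoc, ← EReal.coe_add]
          norm_num
      _ ≤ fbe l l' g γ ustar := add_le_add_right henv _
  intro u hu
  calc ((l ustar : EReal) + g ustar) + ((c * ‖u - ustar‖ ^ 2 : ℝ) : EReal)
      ≤ fbe l l' g γ ustar + ((c * ‖u - ustar‖ ^ 2 : ℝ) : EReal) := add_le_add_left hstar _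
    _ ≤ fbe l l' g γ u := hmin u hu
    _ ≤ (l u : EReal) + g u := hfbe_le u
end

section
/- Gradient formula for the forward–backward envelope with convex g: let g : E → ℝ ∪ {+∞} be proper, convex and lower semicontinuous, so that prox_{γg} : E → E is single-valued, and let γ > 0. If ℓ is differentiable with L-Lipschitz gradient and is twice differentiable at u ∈ E with second derivative (Hessian) ∇²ℓ(u), then φ_γ is differentiable at u and ∇φ_γ(u) = (Id − γ∇²ℓ(u)) R_γ(u), where R_γ(u) := (u − prox_{γg}(u − γ∇ℓ(u)))/γ is the fixed-point residual. -/
open scoped RealInnerProductSpace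
open Filter Topology Asymptotics

lemma le_of_forall_small {a b C : ℝ} (hC : 0 ≤ C)
    (h : ∀ t : ℝ, 0 < t → t ≤ 1 → a ≤ b + t * C) : a ≤ b := by
  refine le_of_forall_pos_le_add fun ε hε => ?_
  set t := min 1 (ε / (C + 1)) with ht
  have ht0 : 0 < t := lt_min one_pos (div_pos hε (by linarith))
  have h1 := h t ht0 (min_le_left _ _)
  have htle : t ≤ ε / (C + 1) := min_le_right _ _
  have h2 : t * C ≤ (ε / (C + 1)) * C := mul_le_mul_of_nonneg_right htle hC
  have h3 : (ε / (C + 1)) * C ≤ ε := by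
    rw [div_mul_eq_mul_div, div_le_iff₀ (by linarith : (0:ℝ) < C + 1)]
    nlinarith
  linarith

section FBEAux
variable {E : Type*} [NormedAddCommGroup E] [InnerProductSpace ℝ E]
variable {g : E → EReal} {γ : ℝ} {P : E → E}

lemma prox_finite_top (hproper : ∃ x, g x ≠ ⊤)
    (hP : ∀ v : E, P v ∈ proxSet g γ v) (v : E) : g (P v) ≠ ⊤ := by
  obtain ⟨x₀, hx₀⟩ := hproper
  intro htop
  have h := hP v x₀
  rw [htop, EReal.top_add_coe] at h
  exact (EReal.add_lt_top hx₀ (EReal.coe_ne_top _)).ne (top_le_iff.mp h)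

lemma prox_key (hbot : ∀ x : E, g x ≠ ⊥) (hproper : ∃ x, g x ≠ ⊤)
    (hP : ∀ v : E, P v ∈ proxSet g γ v) (v w : E) (hwt : g w ≠ ⊤) :
    (g (P v)).toReal + (1 / (2 * γ)) * ‖P v - v‖ ^ 2
      ≤ (g w).toReal + (1 / (2 * γ)) * ‖w - v‖ ^ 2 := by
  have h := hP v w
  rw [← EReal.coe_toReal (prox_finite_top hproper hP v) (hbot _),
    ← EReal.coe_toReal hwt (hbot _), ← EReal.coe_add, ← EReal.coe_add,
    EReal.coe_le_coe_iff] at h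
  exact h

lemma moreau_eq (hbot : ∀ x : E, g x ≠ ⊥) (hproper : ∃ x, g x ≠ ⊤)
    (hP : ∀ v : E, P v ∈ proxSet g γ v) (v : E) :
    moreauEnv g γ v
      = (((g (P v)).toReal + (1 / (2 * γ)) * ‖P v - v‖ ^ 2 : ℝ) : EReal) := by
  have hv : g (P v) = ((g (P v)).toReal : EReal) :=
    (EReal.coe_toReal (prox_finite_top hproper hP v) (hbot _)).symm
  apply le_antisymm
  · have h := iInf_le (fun w : E => g w + (((1 / (2 * γ)) * ‖w - v‖ ^ 2 : ℝ) : EReal)) (P v)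
    rw [hv, ← EReal.coe_add] at h
    exact h
  · refine le_iInf fun w => ?_
    have h := hP v w
    rw [hv, ← EReal.coe_add] at h
    exact h

lemma prox_subgrad (hγ : 0 < γ) (hbot : ∀ x : E, g x ≠ ⊥) (hproper : ∃ x, g x ≠ ⊤)
    (hconv : ∀ x y : E, ∀ t : ℝ, 0 ≤ t → t ≤ 1 →
      g (t • x + (1 - t) • y) ≤ (t : EReal) * g x + ((1 - t : ℝ) : EReal) * g y)
    (hP : ∀ v : E, P v ∈ proxSet g γ v) (v z : E) (hz : g z ≠ ⊤) :
    (g (P v)).toReal - (g z).toReal ≤ (1 / γ) * ⟪P v - v, z - P v⟫ := by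
  set p := P v with hp
  set a := (g p).toReal with ha
  set b := (g z).toReal with hb
  have hga : g p = (a : EReal) := (EReal.coe_toReal (prox_finite_top hproper hP v) (hbot _)).symm
  have hgb : g z = (b : EReal) := (EReal.coe_toReal hz (hbot _)).symm
  have key : ∀ t : ℝ, 0 < t → t ≤ 1 →
      a - b ≤ (1 / γ) * ⟪p - v, z - p⟫ + t * ((1 / (2 * γ)) * ‖z - p‖ ^ 2) := by
    intro t ht0 ht1
    have hcomb := hconv z p t ht0.le ht1
    rw [hga, hgb, ← EReal.coe_mul, ← EReal.coe_mul, ← EReal.coe_add] at hcomb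
    have h2 : g p + (((1 / (2 * γ)) * ‖p - v‖ ^ 2 : ℝ) : EReal)
        ≤ ((t * b + (1 - t) * a : ℝ) : EReal)
          + (((1 / (2 * γ)) * ‖t • z + (1 - t) • p - v‖ ^ 2 : ℝ) : EReal) :=
      (hP v (t • z + (1 - t) • p)).trans (add_le_add_left hcomb _)
    rw [hga, ← EReal.coe_add, ← EReal.coe_add, EReal.coe_le_coe_iff] at h2
    have hexp : t • z + (1 - t) • p - v = (p - v) + t • (z - p) := by module
    rw [hexp, norm_add_sq_real, real_inner_smul_right, norm_smul, Real.norm_eq_abs,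
      abs_of_pos ht0] at h2
    have hcγ : (0:ℝ) < 1 / (2 * γ) := by positivity
    have h3 : t * (a - b) ≤ t * ((1 / γ) * ⟪p - v, z - p⟫ + t * ((1 / (2 * γ)) * ‖z - p‖ ^ 2)) := by
      have : (1:ℝ) / γ = 2 * (1 / (2 * γ)) := by field_simp
      rw [this]; nlinarith [h2]
    exact le_of_mul_le_mul_left (by linarith [h3]) ht0
  exact le_of_forall_small (by positivity) key

lemma prox_nonexpansive (hγ : 0 < γ) (hbot : ∀ x : E, g x ≠ ⊥) (hproper : ∃ x, g x ≠ ⊤)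
    (hconv : ∀ x y : E, ∀ t : ℝ, 0 ≤ t → t ≤ 1 →
      g (t • x + (1 - t) • y) ≤ (t : EReal) * g x + ((1 - t : ℝ) : EReal) * g y)
    (hP : ∀ v : E, P v ∈ proxSet g γ v) (v w : E) :
    ‖P v - P w‖ ≤ ‖v - w‖ := by
  set p := P v
  set q := P w
  have h1 := prox_subgrad hγ hbot hproper hconv hP v q (prox_finite_top hproper hP w)
  have h2 := prox_subgrad hγ hbot hproper hconv hP w p (prox_finite_top hproper hP v)
  have hγ' : (0:ℝ) < 1 / γ := by positivity
  have hsum : 0 ≤ ⟪p - v, q - p⟫ + ⟪q - w, p - q⟫ := by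
    have := add_le_add h1 h2
    nlinarith [this]
  have hexp : ⟪p - v, q - p⟫ + ⟪q - w, p - q⟫ = ⟪v - w, p - q⟫ - ‖p - q‖ ^ 2 := by
    rw [← real_inner_self_eq_norm_sq]
    simp only [inner_sub_left, inner_sub_right]
    ring
  have hcs := real_inner_le_norm (v - w) (p - q)
  have hsq : ‖p - q‖ ^ 2 ≤ ‖v - w‖ * ‖p - q‖ := by
    rw [hexp] at hsum; linarith
  rcases eq_or_lt_of_le (norm_nonneg (p - q)) with h0 | h0
  · rw [← h0]; exact norm_nonneg _
  · have := (mul_le_mul_iff_of_pos_right h0).mp (by nlinarith : ‖p - q‖ * ‖p - q‖ ≤ ‖v - w‖ * ‖p - q‖)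
    exact this

lemma moreau_upper (hγ : 0 < γ) (hbot : ∀ x : E, g x ≠ ⊥) (hproper : ∃ x, g x ≠ ⊤)
    (hP : ∀ v : E, P v ∈ proxSet g γ v) (v v' : E) :
    (moreauEnv g γ v').toReal ≤ (moreauEnv g γ v).toReal
      + ⟪(1 / γ) • (v - P v), v' - v⟫ + (1 / (2 * γ)) * ‖v' - v‖ ^ 2 := by
  rw [moreau_eq hbot hproper hP v', moreau_eq hbot hproper hP v,
    EReal.toReal_coe, EReal.toReal_coe]
  have key := prox_key hbot hproper hP v' (P v) (prox_finite_top hproper hP v)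
  have hexp : P v - v' = (P v - v) - (v' - v) := by abel
  rw [hexp, norm_sub_sq_real (P v - v) (v' - v)] at key
  rw [real_inner_smul_left]
  have hi : ⟪v - P v, v' - v⟫ = -⟪P v - v, v' - v⟫ := by
    rw [← inner_neg_left]; congr 1; abel
  rw [hi]
  have h2γ : (1:ℝ) / γ = 2 * (1 / (2 * γ)) := by field_simp
  rw [h2γ]
  nlinarith [key]

lemma moreau_hasGradient [CompleteSpace E] (hγ : 0 < γ) (hbot : ∀ x : E, g x ≠ ⊥)
    (hproper : ∃ x, g x ≠ ⊤)
    (hconv : ∀ x y : E, ∀ t : ℝ, 0 ≤ t → t ≤ 1 →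
      g (t • x + (1 - t) • y) ≤ (t : EReal) * g x + ((1 - t : ℝ) : EReal) * g y)
    (hP : ∀ v : E, P v ∈ proxSet g γ v) (v : E) :
    HasGradientAt (fun x => (moreauEnv g γ x).toReal) ((1 / γ) • (v - P v)) v := by
  have key : ∀ x' : E, |(moreauEnv g γ x').toReal - (moreauEnv g γ v).toReal
      - ⟪(1 / γ) • (v - P v), x' - v⟫| ≤ (5 / (2 * γ)) * ‖x' - v‖ ^ 2 := by
    intro x'
    have hup := moreau_upper hγ hbot hproper hP v x'
    have hdn := moreau_upper hγ hbot hproper hP x' v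
    have hGd : (1 / γ) • (x' - P x') - (1 / γ) • (v - P v)
        = (1 / γ) • ((x' - v) - (P x' - P v)) := by
      rw [← smul_sub]; congr 1; abel
    have hGn : ‖(1 / γ) • (x' - P x') - (1 / γ) • (v - P v)‖ ≤ (2 / γ) * ‖x' - v‖ := by
      rw [hGd, norm_smul, Real.norm_eq_abs, abs_of_pos (by positivity : (0:ℝ) < 1 / γ)]
      have h1 : ‖(x' - v) - (P x' - P v)‖ ≤ ‖x' - v‖ + ‖P x' - P v‖ := norm_sub_le _ _
      have h2 : ‖P x' - P v‖ ≤ ‖x' - v‖ := prox_nonexpansive hγ hbot hproper hconv hP x' v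
      have h3 : (0:ℝ) < 1 / γ := by positivity
      calc (1 / γ) * ‖(x' - v) - (P x' - P v)‖ ≤ (1 / γ) * (2 * ‖x' - v‖) := by
            apply mul_le_mul_of_nonneg_left (by linarith) h3.le
        _ = (2 / γ) * ‖x' - v‖ := by ring
    have hinner : |⟪(1 / γ) • (x' - P x') - (1 / γ) • (v - P v), x' - v⟫|
        ≤ (2 / γ) * ‖x' - v‖ ^ 2 := by
      calc |⟪(1 / γ) • (x' - P x') - (1 / γ) • (v - P v), x' - v⟫|
          ≤ ‖(1 / γ) • (x' - P x') - (1 / γ) • (v - P v)‖ * ‖x' - v‖ :=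
            abs_real_inner_le_norm _ _
        _ ≤ ((2 / γ) * ‖x' - v‖) * ‖x' - v‖ :=
            mul_le_mul_of_nonneg_right hGn (norm_nonneg _)
        _ = (2 / γ) * ‖x' - v‖ ^ 2 := by ring
    have hvx : v - x' = -(x' - v) := by abel
    rw [hvx, inner_neg_right, norm_neg] at hdn
    have hsplit : ⟪(1 / γ) • (x' - P x'), x' - v⟫ = ⟪(1 / γ) • (v - P v), x' - v⟫
        + ⟪(1 / γ) • (x' - P x') - (1 / γ) • (v - P v), x' - v⟫ := by
      rw [inner_sub_left]; ring
    rw [hsplit] at hdn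
    obtain ⟨hi1, hi2⟩ := abs_le.mp hinner
    have e1 : 5 / (2 * γ) * ‖x' - v‖ ^ 2
        = 2 / γ * ‖x' - v‖ ^ 2 + 1 / (2 * γ) * ‖x' - v‖ ^ 2 := by
      field_simp; ring
    have e2 : (0:ℝ) ≤ 2 / γ * ‖x' - v‖ ^ 2 := by positivity
    rw [abs_le]
    constructor
    · linarith [hdn, hi1, e1]
    · linarith [hup, e1, e2]
  rw [hasGradientAt_iff_hasFDerivAt, hasFDerivAt_iff_isLittleO, isLittleO_iff]
  intro c hc
  have hK : (0:ℝ) < 5 / (2 * γ) := by positivity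
  have hδ : (0:ℝ) < c / (5 / (2 * γ)) := by positivity
  filter_upwards [Metric.ball_mem_nhds v hδ] with x' hx'
  rw [Metric.mem_ball, dist_eq_norm] at hx'
  have h1 := key x'
  rw [InnerProductSpace.toDual_apply_apply, Real.norm_eq_abs]
  calc |(moreauEnv g γ x').toReal - (moreauEnv g γ v).toReal - ⟪(1 / γ) • (v - P v), x' - v⟫|
      ≤ (5 / (2 * γ)) * ‖x' - v‖ ^ 2 := h1
    _ = ((5 / (2 * γ)) * ‖x' - v‖) * ‖x' - v‖ := by ring
    _ ≤ c * ‖x' - v‖ := by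
        apply mul_le_mul_of_nonneg_right _ (norm_nonneg _)
        calc (5 / (2 * γ)) * ‖x' - v‖ ≤ (5 / (2 * γ)) * (c / (5 / (2 * γ))) :=
              mul_le_mul_of_nonneg_left hx'.le hK.le
          _ = c := by field_simp

end FBEAux

/-- gradient formula for the forward–backward envelope with a
proper, convex, lower semicontinuous `g`:
`∇φ_γ(u) = (Id − γ∇²ℓ(u)) R_γ(u)`. -/
theorem fbe_gradient_formula
    {E : Type*} [NormedAddCommGroup E] [InnerProductSpace ℝ E] [FiniteDimensional ℝ E]
    (l : E → ℝ) (l' : E → E) (g : E → EReal) (L γ : ℝ)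
    (hL : 0 < L) (hγ : 0 < γ)
    (hgrad : ∀ x : E, HasGradientAt l (l' x) x)
    (hlip : ∀ x y : E, ‖l' x - l' y‖ ≤ L * ‖x - y‖)
    (hproper : ∃ x : E, g x ≠ ⊤) (hbot : ∀ x : E, g x ≠ ⊥)
    (hlsc : LowerSemicontinuous g)
    (hconv : ∀ x y : E, ∀ t : ℝ, 0 ≤ t → t ≤ 1 →
      g (t • x + (1 - t) • y) ≤ (t : EReal) * g x + ((1 - t : ℝ) : EReal) * g y)
    (P : E → E)
    (hP : ∀ v : E, P v ∈ proxSet g γ v)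
    (hPuniq : ∀ v w : E, w ∈ proxSet g γ v → w = P v)
    (u : E) (H : E →L[ℝ] E) (hH : HasFDerivAt l' H u) :
    HasGradientAt
      (fun x : E => l x - (γ / 2) * ‖l' x‖ ^ 2 + (moreauEnv g γ (x - γ • l' x)).toReal)
      ((ContinuousLinearMap.id ℝ E - γ • H) ((1 / γ) • (u - P (u - γ • l' u)))) u := by
  set v : E := u - γ • l' u with hv
  -- symmetry of the Hessian
  have hsymm : ∀ a b : E, ⟪H a, b⟫ = ⟪H b, a⟫ := by
    have hd : ∀ y : E, HasFDerivAt l ((InnerProductSpace.toDual ℝ E) (l' y) : E →L[ℝ] ℝ) y :=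
      fun y => (hgrad y).hasFDerivAt
    have he : HasFDerivAt (fun w : E => ((InnerProductSpace.toDual ℝ E) w : E →L[ℝ] ℝ))
        ((InnerProductSpace.toDual ℝ E).toContinuousLinearEquiv.toContinuousLinearMap)
        (l' u) :=
      (InnerProductSpace.toDual ℝ E).toContinuousLinearEquiv.toContinuousLinearMap.hasFDerivAt
    have hf'' : HasFDerivAt (fun y : E => ((InnerProductSpace.toDual ℝ E) (l' y) : E →L[ℝ] ℝ))
        (((InnerProductSpace.toDual ℝ E).toContinuousLinearEquiv.toContinuousLinearMap).comp H)
        u := he.comp u hH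
    intro a b
    have h := second_derivative_symmetric hd hf'' a b
    simpa using h
  -- derivative of x ↦ l x - (γ/2) ‖l' x‖²
  have hl2 : HasFDerivAt (fun x : E => ‖l' x‖ ^ 2)
      ((fderivInnerCLM ℝ (l' u, l' u)).comp (H.prod H)) u := by
    have h := hH.inner ℝ hH
    simpa only [real_inner_self_eq_norm_sq] using h
  have hmain1 : HasFDerivAt (fun x : E => l x - (γ / 2) * ‖l' x‖ ^ 2)
      ((InnerProductSpace.toDual ℝ E) (l' u)
        - (γ / 2) • ((fderivInnerCLM ℝ (l' u, l' u)).comp (H.prod H))) u :=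
    (hgrad u).hasFDerivAt.sub (hl2.const_mul (γ / 2))
  -- derivative of x ↦ m (x - γ l' x)
  have hF : HasFDerivAt (fun x : E => x - γ • l' x) (ContinuousLinearMap.id ℝ E - γ • H) u :=
    (hasFDerivAt_id u).sub (hH.const_smul γ)
  have hmor := moreau_hasGradient hγ hbot hproper hconv hP v
  have hcomp : HasFDerivAt (fun x : E => (moreauEnv g γ (x - γ • l' x)).toReal)
      (((InnerProductSpace.toDual ℝ E) ((1 / γ) • (v - P v))).comp
        (ContinuousLinearMap.id ℝ E - γ • H)) u :=
    by have := HasFDerivAt.comp u hmor.hasFDerivAt hF; exact this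
  have htotal := hmain1.add hcomp
  rw [hasGradientAt_iff_hasFDerivAt]
  have heq : (InnerProductSpace.toDual ℝ E)
      ((ContinuousLinearMap.id ℝ E - γ • H) ((1 / γ) • (u - P v)))
      = (InnerProductSpace.toDual ℝ E) (l' u)
        - (γ / 2) • ((fderivInnerCLM ℝ (l' u, l' u)).comp (H.prod H))
        + ((InnerProductSpace.toDual ℝ E) ((1 / γ) • (v - P v))).comp
          (ContinuousLinearMap.id ℝ E - γ • H) := by
    ext h
    have hq : v - P v = (u - P v) - γ • l' u := by rw [hv]; abel
    simp only [ContinuousLinearMap.add_apply, ContinuousLinearMap.sub_apply,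
      ContinuousLinearMap.smul_apply, ContinuousLinearMap.coe_comp', Function.comp_apply,
      ContinuousLinearMap.coe_id', id_eq, InnerProductSpace.toDual_apply_apply,
      fderivInnerCLM_apply, ContinuousLinearMap.prod_apply, smul_eq_mul, hq, map_smul]
    simp only [inner_sub_left, inner_sub_right, real_inner_smul_left, real_inner_smul_right]
    rw [hsymm (u - P v) h]
    have f1 : ⟪H h, u - P v⟫ = ⟪u, H h⟫ - ⟪P v, H h⟫ := by
      rw [real_inner_comm, inner_sub_left]
    have f2 : ⟪H h, l' u⟫ = ⟪l' u, H h⟫ := real_inner_comm _ _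
    rw [f1, f2]
    field_simp
    ring
  rw [heq]
  exact htotal
end
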